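/- Let F ∈ F_q[X_0,...,X_{n+1}] be a homogeneous polynomial of degree d ≤ q that vanishes at every F_q-point of P^{n+1} (equivalently, at every point of F_q^{n+2}). Then F is the zero polynomial. -/

import Mathlib

/-- a homogeneous polynomial of degree `d ≤ q` vanishing at every point of
`F_q^{n+2}` is the zero polynomial. -/
theorem stmt8 (q d n : ℕ) (K : Type*) [Field K] [Fintype K] (hK : Fintype.card K = q)
    (F : MvPolynomial (Fin (n + 2)) K) (hF : F.IsHomogeneous d) (hdq : d ≤ q)
    (hvan : ∀ x : Fin (n + 2) → K, MvPolynomial.eval x F = 0) :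
    F = 0 := by
  classical
  have hq1 : 1 ≤ q := hK ▸ Fintype.card_pos
  -- each variable degree is at most q - 1
  suffices hbound : ∀ s ∈ F.support, ∀ i, s i ≤ q - 1 by
    have he : Function.Injective (ULift.up.{u_1} : Fin (n+2) → ULift (Fin (n+2))) :=
      ULift.up_injective
    have hz : MvPolynomial.rename ULift.up.{u_1} F = 0 := by
      apply MvPolynomial.eq_zero_of_eval_eq_zero _ K
      · intro v
        rw [MvPolynomial.eval_rename]
        exact hvan _
      · rw [hK, MvPolynomial.mem_restrictDegree]
        intro s hs i
        rw [MvPolynomial.support_rename_of_injective he] at hs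
        obtain ⟨m, hm, rfl⟩ := Finset.mem_image.mp hs
        obtain ⟨j⟩ := i
        rw [show (ULift.up j : ULift (Fin (n+2))) = ULift.up.{u_1} j from rfl,
          Finsupp.mapDomain_apply he]
        exact hbound m hm j
    exact MvPolynomial.rename_injective _ he (by simpa using hz)
  intro s hs i
  by_contra hlt
  push_neg at hlt
  have hcoeff : MvPolynomial.coeff s F ≠ 0 := MvPolynomial.mem_support_iff.mp hs
  have hdeg : s.degree = d := by rw [Finsupp.degree_eq_weight_one]; exact hF hcoeff
  have hle : s i ≤ d := by
    rw [← hdeg, Finsupp.degree]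
    by_cases hi : i ∈ s.support
    · exact Finset.single_le_sum (fun j _ => Nat.zero_le _) hi
    · simp [Finsupp.notMem_support_iff.mp hi]
  have hsi : s i = q := by omega
  have hdq' : d = q := by omega
  have hss : s = Finsupp.single i q := by
    have hsub : s.support ⊆ {i} := by
      intro j hj
      by_contra hji
      have hji' : j ≠ i := by simpa using hji
      have : q < s.degree := by
        rw [Finsupp.degree]
        have hi : i ∈ s.support := by
          rw [Finsupp.mem_support_iff, hsi]; omega
        calc q = s i + 0 := by omega
        _ < s i + s j := by
          have := Finsupp.mem_support_iff.mp hj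
          omega
        _ ≤ ∑ k ∈ s.support, s k := by
          rw [← Finset.sum_pair (Ne.symm hji')]
          exact Finset.sum_le_sum_of_subset (by
            intro k hk
            simp at hk
            rcases hk with h | h <;> simp [h, hi, hj])
      omega
    have := Finsupp.support_subset_singleton.mp hsub
    rwa [hsi] at this
  -- evaluate at the i-th standard basis vector
  have h0 := hvan (fun j => if j = i then 1 else 0)
  rw [MvPolynomial.eval_eq] at h0
  have hsum : ∑ m ∈ F.support, MvPolynomial.coeff m F *
      ∏ j ∈ m.support, (if j = i then (1:K) else 0) ^ m j = MvPolynomial.coeff s F := by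
    rw [Finset.sum_eq_single s]
    · have : s.support = {i} := by
        rw [hss]
        exact Finsupp.support_single_ne_zero i (by omega)
      rw [this]
      simp [hss]
    · intro m hm hms
      have hmdeg : m.degree = d := by
        rw [Finsupp.degree_eq_weight_one]; exact hF (MvPolynomial.mem_support_iff.mp hm)
      have hnot : ¬ m.support ⊆ {i} := by
        intro hsub
        have hm' := Finsupp.support_subset_singleton.mp hsub
        apply hms
        have hmi : m i = q := by
          have : m.degree = m i := by
            conv_lhs => rw [hm']
            simp only [Finsupp.degree]
            rcases eq_or_ne (m i) 0 with h | h
            · simp [h]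
            · exact Finsupp.degree_single i (m i)
          omega
        rw [hm', hmi, hss]
      obtain ⟨j, hj, hji⟩ : ∃ j ∈ m.support, j ≠ i := by
        by_contra hc
        push_neg at hc
        exact hnot (fun j hj => by simp [hc j hj])
      have : MvPolynomial.coeff m F *
          ∏ k ∈ m.support, (if k = i then (1:K) else 0) ^ m k = 0 := by
        rw [Finset.prod_eq_zero hj]
        · ring
        · rw [if_neg hji]
          exact zero_pow (Finsupp.mem_support_iff.mp hj)
      exact this
    · intro h; exact absurd hs h
  rw [hsum] at h0
  exact hcoeff h0
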